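/- Let t ≥ 4 be even, let D be a symmetric cycle in the hypercube graph on {1,−1}^t with subtopes S^k = (1/2)(D^k + D^{k+1}), k = 0,…,2t−1. Let T′, T″ ∈ {1,−1}^t be adjacent vertices (Hamming distance 1) and S := (1/2)(T′ + T″) their common subtope. Then there exist a subset Q̄ ⊂ {S^0,…,S^{2t−1}} and positive integers λ_Q with 1 ≤ λ_Q ≤ t−1 (Q ∈ Q̄) such that S = Σ_{Q ∈ Q̄} λ_Q · Q, where Q̄ contains at most one element from each antipodal pair {S^k, S^{k+t}}. -/
import Mathlib

private lemma sum_Ico_neg_one_pow (a b : ℕ) (hab : a ≤ b) :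
    ∑ l ∈ Finset.Ico a b, (-1:ℝ)^l = ((-1)^a - (-1)^b)/2 := by
  induction b, hab using Nat.le_induction with
  | base => simp
  | succ b hab ih =>
    rw [Finset.sum_Ico_succ_top hab, ih, pow_succ]
    ring

private lemma sum_range_split3 (f : ℕ → ℝ) (μ t : ℕ) (h : μ < t) :
    ∑ l ∈ Finset.range t, f l =
      (∑ l ∈ Finset.Ico 0 μ, f l) + f μ + ∑ l ∈ Finset.Ico (μ+1) t, f l := by
  rw [Finset.range_eq_Ico, ← Finset.sum_Ico_consecutive f (Nat.zero_le (μ+1)) h,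
    Finset.sum_Ico_succ_top (Nat.zero_le μ)]

private lemma sum_range_split5 (f : ℕ → ℝ) (μ κ t : ℕ) (h1 : μ < κ) (h2 : κ < t) :
    ∑ l ∈ Finset.range t, f l =
      (∑ l ∈ Finset.Ico 0 μ, f l) + f μ + (∑ l ∈ Finset.Ico (μ+1) κ, f l) + f κ
        + ∑ l ∈ Finset.Ico (κ+1) t, f l := by
  rw [sum_range_split3 f κ t h2, show Finset.Ico 0 κ = Finset.range κ by rw [Finset.range_eq_Ico],
    sum_range_split3 f μ κ h1]

private lemma key_piece (F : ℕ → ℝ) (a b : ℕ) (c : ℝ) (hab : a ≤ b)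
    (hc : ∀ l ∈ Finset.Ico a b, F l = c * (-1)^l) :
    ∑ l ∈ Finset.Ico a b, F l = c * (((-1:ℝ)^a - (-1)^b)/2) := by
  rw [Finset.sum_congr rfl hc, ← Finset.mul_sum, sum_Ico_neg_one_pow a b hab]

private lemma core_sum (t μ κ : ℕ) (hev : Even t) (hμ : μ < t) (hκ : κ < t) :
    ∑ l ∈ Finset.range t,
      ((if κ = l then (0:ℝ) else (-1)^(l + κ) * (if κ < l then 1 else -1)) *
        (if l = μ then 0 else if μ < l then -1 else 1)) = if μ = κ then 1 else 0 := by
  set F : ℕ → ℝ := fun l =>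
    ((if κ = l then (0:ℝ) else (-1)^(l + κ) * (if κ < l then 1 else -1)) *
      (if l = μ then 0 else if μ < l then -1 else 1)) with hF
  have ht : (-1:ℝ)^t = 1 := hev.neg_one_pow
  have hFμ : F μ = 0 := by simp [hF]
  have hFκ : F κ = 0 := by simp [hF]
  have hy : (-1:ℝ)^κ * (-1)^κ = 1 := by
    rw [← pow_add]
    exact Even.neg_one_pow ⟨κ, rfl⟩
  rcases lt_trichotomy μ κ with hlt | heq | hgt
  · rw [if_neg (Nat.ne_of_lt hlt), sum_range_split5 F μ κ t hlt hκ, hFμ, hFκ,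
      key_piece F 0 μ (-(-1)^κ) (Nat.zero_le μ)
        (fun l hl => by
          rw [Finset.mem_Ico] at hl
          simp only [hF]
          split_ifs <;> first | omega | (rw [pow_add]; ring)),
      key_piece F (μ+1) κ ((-1)^κ) hlt
        (fun l hl => by
          rw [Finset.mem_Ico] at hl
          simp only [hF]
          split_ifs <;> first | omega | (rw [pow_add]; ring)),
      key_piece F (κ+1) t (-(-1)^κ) hκ
        (fun l hl => by
          rw [Finset.mem_Ico] at hl
          simp only [hF]
          split_ifs <;> first | omega | (rw [pow_add]; ring))]
    rw [pow_succ, pow_succ, ht, pow_zero]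
    ring
  · subst heq
    rw [if_pos rfl, sum_range_split3 F μ t hμ, hFμ,
      key_piece F 0 μ (-(-1)^μ) (Nat.zero_le μ)
        (fun l hl => by
          rw [Finset.mem_Ico] at hl
          simp only [hF]
          split_ifs <;> first | omega | (rw [pow_add]; ring)),
      key_piece F (μ+1) t (-(-1)^μ) hμ
        (fun l hl => by
          rw [Finset.mem_Ico] at hl
          simp only [hF]
          split_ifs <;> first | omega | (rw [pow_add]; ring))]
    rw [pow_succ, ht, pow_zero]
    linear_combination hy
  · rw [if_neg (Nat.ne_of_gt hgt), sum_range_split5 F κ μ t hgt hμ, hFμ, hFκ,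
      key_piece F 0 κ (-(-1)^κ) (Nat.zero_le κ)
        (fun l hl => by
          rw [Finset.mem_Ico] at hl
          simp only [hF]
          split_ifs <;> first | omega | (rw [pow_add]; ring)),
      key_piece F (κ+1) μ ((-1)^κ) hgt
        (fun l hl => by
          rw [Finset.mem_Ico] at hl
          simp only [hF]
          split_ifs <;> first | omega | (rw [pow_add]; ring)),
      key_piece F (μ+1) t (-(-1)^κ) hμ
        (fun l hl => by
          rw [Finset.mem_Ico] at hl
          simp only [hF]
          split_ifs <;> first | omega | (rw [pow_add]; ring))]
    rw [pow_succ, pow_succ, ht, pow_zero]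
    ring

private lemma flip_count (t : ℕ) (ht : 0 < t) (D : ℕ → Fin t → ℝ)
    (hpm : ∀ k, k ≤ t → ∀ i, D k i = 1 ∨ D k i = -1)
    (hDt : ∀ i, D t i = -(D 0 i))
    (hflip1 : ∀ k < t, (Finset.univ.filter fun i => D k i ≠ D (k+1) i).card = 1) :
    ∀ i, ((Finset.range t).filter fun k => D k i ≠ D (k+1) i).card = 1 := by
  classical
  have hsumt : ∑ i : Fin t, ((Finset.range t).filter fun k => D k i ≠ D (k+1) i).card = t := by
    have h1 : ∀ i : Fin t, ((Finset.range t).filter fun k => D k i ≠ D (k+1) i).card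
        = ∑ k ∈ Finset.range t, if D k i ≠ D (k+1) i then 1 else 0 := by
      intro i; rw [Finset.card_filter]
    rw [Finset.sum_congr rfl fun i _ => h1 i, Finset.sum_comm]
    have h2 : ∀ k ∈ Finset.range t, (∑ i : Fin t, if D k i ≠ D (k+1) i then 1 else 0) = 1 := by
      intro k hk
      rw [← Finset.card_filter]
      exact hflip1 k (Finset.mem_range.mp hk)
    rw [Finset.sum_congr rfl h2, Finset.sum_const, Finset.card_range, smul_eq_mul, mul_one]
  have hodd : ∀ i : Fin t, Odd ((Finset.range t).filter fun k => D k i ≠ D (k+1) i).card := by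
    intro i
    have htel : ∀ n, n ≤ t → ∏ k ∈ Finset.range n, (D k i * D (k+1) i) = D 0 i * D n i := by
      intro n
      induction n with
      | zero =>
        intro _
        rw [Finset.prod_range_zero]
        rcases hpm 0 (by omega) i with h|h <;> rw [h] <;> norm_num
      | succ n ih =>
        intro hn
        rw [Finset.prod_range_succ, ih (by omega)]
        have hsq : D n i * D n i = 1 := by
          rcases hpm n (by omega) i with h|h <;> rw [h] <;> norm_num
        linear_combination (D 0 i * D (n+1) i) * hsq
    have hprodval : ∏ k ∈ Finset.range t, (D k i * D (k+1) i) = -1 := by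
      rw [htel t le_rfl, hDt i]
      rcases hpm 0 (by omega) i with h|h <;> rw [h] <;> norm_num
    have hprodpow : ∏ k ∈ Finset.range t, (D k i * D (k+1) i)
        = (-1:ℝ)^(((Finset.range t).filter fun k => D k i ≠ D (k+1) i).card) := by
      have h3 : ∀ k ∈ Finset.range t, D k i * D (k+1) i = if D k i ≠ D (k+1) i then -1 else 1 := by
        intro k hk
        rw [Finset.mem_range] at hk
        rcases hpm k (by omega) i with h1|h1 <;> rcases hpm (k+1) (by omega) i with h2|h2 <;>
          rw [h1, h2] <;> norm_num
      rw [Finset.prod_congr rfl h3, Finset.prod_ite, Finset.prod_const, Finset.prod_const,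
        one_pow, mul_one]
    have hval : (-1:ℝ)^(((Finset.range t).filter fun k => D k i ≠ D (k+1) i).card) = -1 := by
      rw [← hprodpow, hprodval]
    rcases Nat.even_or_odd (((Finset.range t).filter fun k => D k i ≠ D (k+1) i).card) with he|ho
    · exfalso; rw [he.neg_one_pow] at hval; norm_num at hval
    · exact ho
  intro i
  by_contra hne
  have hge1 : ∀ j : Fin t, 1 ≤ ((Finset.range t).filter fun k => D k j ≠ D (k+1) j).card := by
    intro j
    rcases hodd j with ⟨n, hn⟩
    omega
  have hlt : (∑ _j : Fin t, 1)
      < ∑ j : Fin t, ((Finset.range t).filter fun k => D k j ≠ D (k+1) j).card := by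
    apply Finset.sum_lt_sum (fun j _ => hge1 j)
    refine ⟨i, Finset.mem_univ i, ?_⟩
    rcases hodd i with ⟨n, hn⟩
    omega
  rw [hsumt] at hlt
  simp at hlt

theorem stmt_9 (t : ℕ) (ht : 4 ≤ t) (hev : Even t)
    (D : ℕ → Fin t → ℝ)
    (hpm : ∀ k < 2 * t, ∀ i, D k i = 1 ∨ D k i = -1)
    (hinj : ∀ k < 2 * t, ∀ l < 2 * t, D k = D l → k = l)
    (hadj : ∀ k < 2 * t,
      (Finset.univ.filter fun i => D k i ≠ D ((k + 1) % (2 * t)) i).card = 1)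
    (hsym : ∀ k < t, ∀ i, D (k + t) i = -(D k i))
    (T' T'' : Fin t → ℝ)
    (hT' : ∀ i, T' i = 1 ∨ T' i = -1) (hT'' : ∀ i, T'' i = 1 ∨ T'' i = -1)
    -- T' and T'' are adjacent: Hamming distance 1
    (hH : (Finset.univ.filter fun i => T' i ≠ T'' i).card = 1) :
    -- the subtope S = (1/2)(T' + T'') decomposes over the subtopes of the cycle,
    -- taking (via the sign ε_k) at most one member of each antipodal pair
    -- {S^k, S^{k+t}} = {S^k, -S^k}, with coefficients c_k, 0 ≤ c_k ≤ t-1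
    -- (c_k ≥ 1 exactly on the members used):
    ∃ ε c : Fin t → ℤ,
      (∀ k, ε k = 1 ∨ ε k = -1) ∧
      (∀ k, 0 ≤ c k ∧ c k ≤ (t : ℤ) - 1) ∧
      (∀ i, (T' i + T'' i) / 2 =
        ∑ k : Fin t, ((c k * ε k : ℤ) : ℝ) *
          ((D (k : ℕ) i + D ((k : ℕ) + 1) i) / 2)) := by
  classical
  -- the coordinate where T' and T'' differ
  obtain ⟨j0, hj0⟩ := Finset.card_eq_one.mp hH
  have hj0mem : ∀ i : Fin t, T' i ≠ T'' i ↔ i = j0 := by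
    intro i
    constructor
    · intro h
      have hmem : i ∈ Finset.univ.filter fun i => T' i ≠ T'' i := by
        simp [h]
      rw [hj0] at hmem
      exact Finset.mem_singleton.mp hmem
    · intro h
      have hmem : i ∈ Finset.univ.filter fun i => T' i ≠ T'' i := by
        rw [hj0]; exact Finset.mem_singleton.mpr h
      exact (Finset.mem_filter.mp hmem).2
  -- flips per step
  have hflip1 : ∀ k < t, (Finset.univ.filter fun i => D k i ≠ D (k+1) i).card = 1 := by
    intro k hk
    have h2 : k < 2*t := by omega
    have h3 := hadj k h2
    rwa [Nat.mod_eq_of_lt (by omega)] at h3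
  -- each coordinate flips exactly once among the first t steps
  have hcount : ∀ i, ((Finset.range t).filter fun k => D k i ≠ D (k+1) i).card = 1 := by
    apply flip_count t (by omega) D (fun k hk i => hpm k (by omega) i)
    · intro i
      have := hsym 0 (by omega) i
      rwa [zero_add] at this
    · exact hflip1
  have hmex : ∀ i : Fin t, ∃ k, ((Finset.range t).filter fun k => D k i ≠ D (k+1) i) = {k} :=
    fun i => Finset.card_eq_one.mp (hcount i)
  choose m hm using hmex
  have hmmem : ∀ i : Fin t, m i ∈ (Finset.range t).filter fun k => D k i ≠ D (k+1) i := by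
    intro i
    rw [hm i]
    exact Finset.mem_singleton_self (m i)
  have hmlt : ∀ i : Fin t, m i < t := fun i =>
    Finset.mem_range.mp (Finset.mem_filter.mp (hmmem i)).1
  have hmflip : ∀ i : Fin t, D (m i) i ≠ D (m i + 1) i := fun i =>
    (Finset.mem_filter.mp (hmmem i)).2
  have hmuniq : ∀ (i : Fin t) (k : ℕ), k < t → D k i ≠ D (k+1) i → k = m i := by
    intro i k hk hne
    have hmem : k ∈ (Finset.range t).filter fun k => D k i ≠ D (k+1) i :=
      Finset.mem_filter.mpr ⟨Finset.mem_range.mpr hk, hne⟩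
    rw [hm i] at hmem
    exact Finset.mem_singleton.mp hmem
  have hminj : ∀ i i' : Fin t, m i = m i' → i = i' := by
    intro i i' h
    obtain ⟨a, ha⟩ := Finset.card_eq_one.mp (hflip1 (m i) (hmlt i))
    have h1 : i ∈ Finset.univ.filter fun x => D (m i) x ≠ D (m i + 1) x :=
      Finset.mem_filter.mpr ⟨Finset.mem_univ _, hmflip i⟩
    have h2 : i' ∈ Finset.univ.filter fun x => D (m i) x ≠ D (m i + 1) x := by
      refine Finset.mem_filter.mpr ⟨Finset.mem_univ _, ?_⟩
      rw [h]; exact hmflip i'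
    rw [ha] at h1 h2
    exact (Finset.mem_singleton.mp h1).trans (Finset.mem_singleton.mp h2).symm
  -- values of D along the cycle
  have hDval : ∀ n, n ≤ t → ∀ i : Fin t, D n i = D 0 i * (if m i < n then -1 else 1) := by
    intro n
    induction n with
    | zero => intro _ i; simp
    | succ n ih =>
      intro hn i
      have hnt : n < t := hn
      have ihi := ih (by omega) i
      by_cases hmi : m i = n
      · have hne : D n i ≠ D (n+1) i := by rw [← hmi]; exact hmflip i
        have hflipval : D (n+1) i = -(D n i) := by
          rcases hpm n (by omega) i with h1|h1 <;> rcases hpm (n+1) (by omega) i with h2|h2 <;>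
            rw [h1, h2] at hne ⊢ <;> first | exact absurd rfl hne | norm_num
        rw [hflipval, ihi, if_neg (by omega), if_pos (by omega)]
        ring
      · have heq : D (n+1) i = D n i := by
          by_contra hne
          exact hmi (hmuniq i n hnt (fun heq => hne heq.symm)).symm
        rw [heq, ihi]
        by_cases h : m i < n
        · rw [if_pos h, if_pos (by omega)]
        · rw [if_neg h, if_neg (by omega)]
  -- values of subtopes
  have hSval : ∀ l, l < t → ∀ i : Fin t,
      (D l i + D (l+1) i)/2 = if l = m i then 0 else D 0 i * (if m i < l then -1 else 1) := by
    intro l hl i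
    rw [hDval l (by omega) i, hDval (l+1) (by omega) i]
    by_cases h : l = m i
    · rw [if_pos h, if_neg (by omega), if_pos (by omega)]
      ring
    · rw [if_neg h]
      by_cases h2 : m i < l
      · rw [if_pos h2, if_pos (by omega)]
        ring
      · rw [if_neg h2, if_neg (by omega)]
        ring
  have hDsq : ∀ i : Fin t, D 0 i * D 0 i = 1 := by
    intro i
    rcases hpm 0 (by omega) i with h|h <;> rw [h] <;> norm_num
  have hsgn : ∀ i' : Fin t, (if T' i' = D 0 i' then (1:ℝ) else -1) = T' i' * D 0 i' := by
    intro i'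
    rcases hT' i' with h|h <;> rcases hpm 0 (by omega) i' with h0|h0 <;>
      rw [h, h0] <;> norm_num
  -- the integer coefficients
  obtain ⟨A, hA⟩ : ∃ A : Fin t → ℤ, ∀ l : Fin t, A l = ∑ i' : Fin t,
      (if i' = j0 ∨ m i' = (l:ℕ) then 0 else
        (if T' i' = D 0 i' then 1 else -1) * (-1)^((l:ℕ) + m i') *
          (if m i' < (l:ℕ) then 1 else -1)) := ⟨_, fun _ => rfl⟩
  refine ⟨fun l => if 0 ≤ A l then 1 else -1, fun l => |A l|, ?_, ?_, ?_⟩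
  · intro k
    by_cases h : 0 ≤ A k <;> simp [h]
  · intro k
    refine ⟨abs_nonneg _, ?_⟩
    have h1 : |A k| ≤ ∑ i' : Fin t,
        |(if i' = j0 ∨ m i' = (k:ℕ) then (0:ℤ) else
          (if T' i' = D 0 i' then 1 else -1) * (-1)^((k:ℕ) + m i') *
            (if m i' < (k:ℕ) then 1 else -1))| := by
      rw [hA k]
      exact Finset.abs_sum_le_sum_abs _ _
    have h2 : ∀ i' : Fin t,
        |(if i' = j0 ∨ m i' = (k:ℕ) then (0:ℤ) else
          (if T' i' = D 0 i' then 1 else -1) * (-1)^((k:ℕ) + m i') *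
            (if m i' < (k:ℕ) then 1 else -1))| ≤ 1 := by
      intro i'
      split_ifs <;> simp [abs_mul, abs_pow]
    have h3 : ∑ i' : Fin t,
        |(if i' = j0 ∨ m i' = (k:ℕ) then (0:ℤ) else
          (if T' i' = D 0 i' then 1 else -1) * (-1)^((k:ℕ) + m i') *
            (if m i' < (k:ℕ) then 1 else -1))|
        = ∑ i' ∈ Finset.univ.erase j0,
        |(if i' = j0 ∨ m i' = (k:ℕ) then (0:ℤ) else
          (if T' i' = D 0 i' then 1 else -1) * (-1)^((k:ℕ) + m i') *
            (if m i' < (k:ℕ) then 1 else -1))| := by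
      rw [← Finset.sum_erase_add _ _ (Finset.mem_univ j0)]
      rw [if_pos (Or.inl rfl)]
      simp
    have h4 : ∑ i' ∈ Finset.univ.erase j0,
        |(if i' = j0 ∨ m i' = (k:ℕ) then (0:ℤ) else
          (if T' i' = D 0 i' then 1 else -1) * (-1)^((k:ℕ) + m i') *
            (if m i' < (k:ℕ) then 1 else -1))| ≤ ∑ _i' ∈ Finset.univ.erase j0, (1:ℤ) :=
      Finset.sum_le_sum (fun i' _ => h2 i')
    have h5 : ∑ _i' ∈ Finset.univ.erase j0, (1:ℤ) = (t:ℤ) - 1 := by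
      rw [Finset.sum_const, Finset.card_erase_of_mem (Finset.mem_univ j0),
        Finset.card_univ, Fintype.card_fin, nsmul_eq_mul, mul_one]
      omega
    calc |A k| ≤ _ := h1
      _ = _ := h3
      _ ≤ _ := h4
      _ = _ := h5
  · -- the decomposition identity
    have hca : ∀ k : Fin t, |A k| * (if 0 ≤ A k then (1:ℤ) else -1) = A k := by
      intro k
      by_cases h : 0 ≤ A k
      · rw [if_pos h, abs_of_nonneg h, mul_one]
      · rw [if_neg h, abs_of_neg (lt_of_not_ge h)]
        ring
    have hAcast : ∀ l : Fin t, ((A l : ℤ) : ℝ) = ∑ i' : Fin t,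
        (if i' = j0 ∨ m i' = (l:ℕ) then 0 else
          (if T' i' = D 0 i' then (1:ℝ) else -1) * (-1)^((l:ℕ) + m i') *
            (if m i' < (l:ℕ) then 1 else -1)) := by
      intro l
      rw [hA l]
      push_cast
      refine Finset.sum_congr rfl fun i' _ => ?_
      split_ifs <;> push_cast <;> ring
    have hinner : ∀ i i' : Fin t,
        (∑ l : Fin t, (if i' = j0 ∨ m i' = (l:ℕ) then (0:ℝ) else
            (if T' i' = D 0 i' then (1:ℝ) else -1) * (-1)^((l:ℕ) + m i') *
              (if m i' < (l:ℕ) then 1 else -1))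
          * ((D (l:ℕ) i + D ((l:ℕ)+1) i)/2))
        = if i' = j0 then 0 else if i = i' then T' i else 0 := by
      intro i i'
      by_cases hij0 : i' = j0
      · rw [if_pos hij0]
        refine Finset.sum_eq_zero fun l _ => ?_
        rw [if_pos (Or.inl hij0), zero_mul]
      · rw [if_neg hij0]
        have hstep : ∀ l : Fin t,
            (if i' = j0 ∨ m i' = (l:ℕ) then (0:ℝ) else
              (if T' i' = D 0 i' then (1:ℝ) else -1) * (-1)^((l:ℕ) + m i') *
                (if m i' < (l:ℕ) then 1 else -1))
              * ((D (l:ℕ) i + D ((l:ℕ)+1) i)/2)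
            = (T' i' * D 0 i' * D 0 i) *
              ((if m i' = (l:ℕ) then (0:ℝ) else
                (-1)^((l:ℕ) + m i') * (if m i' < (l:ℕ) then 1 else -1)) *
               (if (l:ℕ) = m i then 0 else (if m i < (l:ℕ) then -1 else 1))) := by
          intro l
          rw [hSval (l:ℕ) l.isLt i, hsgn i',
            if_congr (or_iff_right hij0) rfl rfl]
          by_cases h1 : m i' = (l:ℕ) <;> by_cases h2 : (l:ℕ) = m i
          · simp only [if_pos h1, if_pos h2]; ring
          · simp only [if_pos h1, if_neg h2]; ring
          · simp only [if_neg h1, if_pos h2]; ring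
          · simp only [if_neg h1, if_neg h2]; ring
        rw [Finset.sum_congr rfl (fun l _ => hstep l), ← Finset.mul_sum]
        have hsum := core_sum t (m i) (m i') hev (hmlt i) (hmlt i')
        rw [Fin.sum_univ_eq_sum_range (fun l =>
          ((if m i' = l then (0:ℝ) else
              (-1)^(l + m i') * (if m i' < l then 1 else -1)) *
            (if l = m i then 0 else (if m i < l then -1 else 1)))) t]
        rw [hsum]
        by_cases him : i = i'
        · subst him
          rw [if_pos rfl, if_pos rfl, mul_one]
          have := hDsq i
          linear_combination T' i * this
        · rw [if_neg him, if_neg (fun h => him (hminj i i' h)), mul_zero]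
    intro i
    have hmain : (∑ k : Fin t, ((|A k| * (if 0 ≤ A k then (1:ℤ) else -1) : ℤ) : ℝ) *
          ((D (k:ℕ) i + D ((k:ℕ)+1) i)/2))
        = ∑ i' : Fin t, (if i' = j0 then (0:ℝ) else if i = i' then T' i else 0) := by
      calc ∑ k : Fin t, ((|A k| * (if 0 ≤ A k then (1:ℤ) else -1) : ℤ) : ℝ) *
            ((D (k:ℕ) i + D ((k:ℕ)+1) i)/2)
          = ∑ k : Fin t, (∑ i' : Fin t,
              (if i' = j0 ∨ m i' = (k:ℕ) then (0:ℝ) else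
                (if T' i' = D 0 i' then (1:ℝ) else -1) * (-1)^((k:ℕ) + m i') *
                  (if m i' < (k:ℕ) then 1 else -1)))
              * ((D (k:ℕ) i + D ((k:ℕ)+1) i)/2) := by
            refine Finset.sum_congr rfl fun k _ => ?_
            rw [hca k, hAcast k]
        _ = ∑ k : Fin t, ∑ i' : Fin t,
              (if i' = j0 ∨ m i' = (k:ℕ) then (0:ℝ) else
                (if T' i' = D 0 i' then (1:ℝ) else -1) * (-1)^((k:ℕ) + m i') *
                  (if m i' < (k:ℕ) then 1 else -1))
              * ((D (k:ℕ) i + D ((k:ℕ)+1) i)/2) := by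
            refine Finset.sum_congr rfl fun k _ => ?_
            rw [Finset.sum_mul]
        _ = ∑ i' : Fin t, ∑ k : Fin t,
              (if i' = j0 ∨ m i' = (k:ℕ) then (0:ℝ) else
                (if T' i' = D 0 i' then (1:ℝ) else -1) * (-1)^((k:ℕ) + m i') *
                  (if m i' < (k:ℕ) then 1 else -1))
              * ((D (k:ℕ) i + D ((k:ℕ)+1) i)/2) := Finset.sum_comm
        _ = ∑ i' : Fin t, (if i' = j0 then (0:ℝ) else if i = i' then T' i else 0) :=
            Finset.sum_congr rfl fun i' _ => hinner i i'
    refine Eq.trans ?_ hmain.symm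
    by_cases hij0 : i = j0
    · subst hij0
      have hT''j0 : T'' i = -(T' i) := by
        have hne : T' i ≠ T'' i := (hj0mem i).mpr rfl
        rcases hT' i with h|h <;> rcases hT'' i with h2|h2 <;> rw [h, h2] at hne ⊢ <;>
          first | exact absurd rfl hne | norm_num
      rw [hT''j0, Finset.sum_eq_zero]
      · ring
      · intro i' _
        by_cases h1 : i' = i
        · rw [if_pos h1]
        · rw [if_neg h1, if_neg (fun h => h1 h.symm)]
    · have hT''i : T'' i = T' i := by
        by_contra hne
        exact hij0 ((hj0mem i).mp (fun h => hne h.symm))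
      rw [hT''i, Finset.sum_eq_single i]
      · rw [if_neg hij0, if_pos rfl]
        ring
      · intro i' _ hne
        by_cases h1 : i' = j0
        · rw [if_pos h1]
        · rw [if_neg h1, if_neg (fun h => hne h.symm)]
      · intro h
        exact absurd (Finset.mem_univ i) h
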